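/- Let α, β ∈ ℝ⁺ \ {1}, let φ₂ be a complex polynomial of degree 2 and φ₁ a non-constant entire function, and define Θₙ(x) = α^{φ₁(x)} (dⁿ/dxⁿ)(β^{−φ₂(x)}). Then y = Θₙ satisfies the second-order linear ODE: y″ + [ (log β) φ₂′(x) − 2(log α) φ₁′(x) ] y′ + [ (log α)² (φ₁′(x))² − (log α) φ₁″(x) − (log α)(log β) φ₁′(x) φ₂′(x) + (n+1)(log β) φ₂″(x) ] y = 0, for all x. -/

import Mathlib

open Complex Polynomial

lemma entire_iteratedDeriv_diff {f : ℂ → ℂ} (hf : Differentiable ℂ f) (m : ℕ) :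
    Differentiable ℂ (iteratedDeriv m f) := by
  refine (hf.contDiff (n := (⊤ : WithTop ℕ∞))).differentiable_iteratedDeriv m ?_
  exact WithTop.coe_lt_top _

theorem second_order_ode
    (α β : ℝ) (hα : 0 < α) (hα1 : α ≠ 1) (hβ : 0 < β) (hβ1 : β ≠ 1)
    (φ₁ φ₂ : ℂ → ℂ) (hφ₁ : Differentiable ℂ φ₁)
    (hφ₁nc : ¬ ∃ c : ℂ, ∀ x, φ₁ x = c)
    (P : Polynomial ℂ) (hP : P.degree = 2) (hφ₂ : ∀ z, φ₂ z = P.eval z)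
    (Θ : ℕ → ℂ → ℂ)
    (hΘ : ∀ n x, Θ n x = Complex.exp (φ₁ x * (Real.log α : ℂ)) *
      iteratedDeriv n (fun z => Complex.exp (-(φ₂ z) * (Real.log β : ℂ))) x)
    (n : ℕ) (x : ℂ) :
    iteratedDeriv 2 (Θ n) x
      + ((Real.log β : ℂ) * deriv φ₂ x - 2 * (Real.log α : ℂ) * deriv φ₁ x) * deriv (Θ n) x
      + ((Real.log α : ℂ) ^ 2 * (deriv φ₁ x) ^ 2
          - (Real.log α : ℂ) * iteratedDeriv 2 φ₁ x
          - (Real.log α : ℂ) * (Real.log β : ℂ) * deriv φ₁ x * deriv φ₂ x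
          + ((n : ℂ) + 1) * (Real.log β : ℂ) * iteratedDeriv 2 φ₂ x) * Θ n x = 0 := by
  set a : ℂ := (Real.log α : ℂ) with ha
  set b : ℂ := (Real.log β : ℂ) with hb
  set Q : Polynomial ℂ := derivative P with hQdef
  set f : ℂ → ℂ := fun z => Complex.exp (-(P.eval z) * b) with hfdef
  have hφ₂f : φ₂ = fun z => P.eval z := funext hφ₂
  have hfe : (fun z => Complex.exp (-(φ₂ z) * b)) = f := by
    funext z; rw [hφ₂ z]
  have hPnd : P.natDegree = 2 := natDegree_eq_of_degree_eq_some hP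
  set c : ℂ := (derivative Q).coeff 0 with hcdef
  have hRC : derivative Q = C c := by
    have h1 : Q.natDegree ≤ 1 := by
      have h := natDegree_derivative_le P
      rw [← hQdef] at h; omega
    have h0 : (derivative Q).natDegree ≤ 0 := by
      have h := natDegree_derivative_le Q; omega
    exact Polynomial.eq_C_of_natDegree_le_zero h0
  -- derivatives of φ₂
  have hdP : deriv (fun z => P.eval z) = fun z => Q.eval z := by
    funext z; rw [hQdef]; exact P.deriv
  have hdφ₂ : deriv φ₂ x = Q.eval x := by
    rw [hφ₂f, hdP]
  have hddφ₂ : iteratedDeriv 2 φ₂ x = c := by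
    rw [show (2:ℕ) = 1 + 1 from rfl, iteratedDeriv_succ, iteratedDeriv_one, hφ₂f, hdP]
    have h : deriv (fun z => Q.eval z) x = (derivative Q).eval x := Q.deriv
    rw [h, hRC, eval_C]
  -- f is entire
  have hfd : Differentiable ℂ f := fun z =>
    (((P.differentiable z).neg.mul_const b).cexp)
  have hD : ∀ m, Differentiable ℂ (iteratedDeriv m f) := entire_iteratedDeriv_diff hfd
  have hDer : ∀ m (y : ℂ), HasDerivAt (iteratedDeriv m f) (iteratedDeriv (m+1) f y) y := by
    intro m y
    rw [iteratedDeriv_succ]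
    exact ((hD m) y).hasDerivAt
  have hf' : ∀ y : ℂ, HasDerivAt f (-(Q.eval y) * b * f y) y := by
    intro y
    have h := ((P.hasDerivAt y).neg.mul_const b).cexp
    rw [hQdef]
    refine h.congr_deriv ?_
    simp only [hfdef, Pi.neg_apply]; ring
  have hf1 : ∀ y : ℂ, iteratedDeriv 1 f y = -(Q.eval y) * b * f y := by
    intro y
    rw [iteratedDeriv_one, (hf' y).deriv]
  -- the key ODE for iterated derivatives of f
  have key : ∀ k (y : ℂ), iteratedDeriv (k+2) f y
      = -(b * Q.eval y * iteratedDeriv (k+1) f y) - ((k:ℂ)+1) * b * c * iteratedDeriv k f y := by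
    intro k
    induction k with
    | zero =>
      intro y
      have hfun : iteratedDeriv 1 f = fun z => -(Q.eval z) * b * f z := funext hf1
      have hu : HasDerivAt (fun z => -(Q.eval z) * b) (-c * b) y := by
        have h := (Q.hasDerivAt y).neg.mul_const b
        rwa [hRC, eval_C] at h
      have hd : deriv (iteratedDeriv 1 f) y
          = -c * b * f y + -(Q.eval y) * b * (-(Q.eval y) * b * f y) := by
        rw [hfun]; exact (hu.mul (hf' y)).deriv
      show iteratedDeriv (1+1) f y
          = -(b * Q.eval y * iteratedDeriv 1 f y) - (((0:ℕ):ℂ)+1) * b * c * iteratedDeriv 0 f y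
      rw [iteratedDeriv_succ, hd, hf1 y, iteratedDeriv_zero]
      push_cast; ring
    | succ k ih =>
      intro y
      have hfun : iteratedDeriv (k+2) f
          = fun z => -(b * Q.eval z * iteratedDeriv (k+1) f z)
              - ((k:ℂ)+1) * b * c * iteratedDeriv k f z := funext ih
      have h1 : HasDerivAt (fun z => b * Q.eval z) (b * c) y := by
        have h := (Q.hasDerivAt y).const_mul b
        rwa [hRC, eval_C] at h
      have h2 := (h1.mul (hDer (k+1) y)).neg
      have h3 := (hDer k y).const_mul (((k:ℂ)+1) * b * c)
      have hd : deriv (iteratedDeriv (k+2) f) y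
          = -(b * c * iteratedDeriv (k+1) f y + b * Q.eval y * iteratedDeriv (k+2) f y)
            - ((k:ℂ)+1) * b * c * iteratedDeriv (k+1) f y := by
        conv_lhs => rw [hfun]
        exact (h2.sub h3).deriv
      show iteratedDeriv ((k+2)+1) f y
          = -(b * Q.eval y * iteratedDeriv (k+2) f y)
            - ((((k:ℕ)+1 : ℕ):ℂ)+1) * b * c * iteratedDeriv (k+1) f y
      rw [iteratedDeriv_succ, hd]
      push_cast; ring
  -- main computation
  set E : ℂ → ℂ := fun z => Complex.exp (φ₁ z * a) with hEdef
  set g : ℂ → ℂ := iteratedDeriv n f with hgdef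
  have hTh : Θ n = fun z => E z * g z := by
    funext z; rw [hΘ n z, hfe]
  have hφ₁' : ∀ y : ℂ, HasDerivAt φ₁ (deriv φ₁ y) y := fun y => (hφ₁ y).hasDerivAt
  have hφ₁d2 : Differentiable ℂ (deriv φ₁) := by
    have h := entire_iteratedDeriv_diff hφ₁ 1
    rwa [iteratedDeriv_one] at h
  have hφ₁'' : ∀ y : ℂ, HasDerivAt (deriv φ₁) (iteratedDeriv 2 φ₁ y) y := by
    intro y
    have h : iteratedDeriv 2 φ₁ y = deriv (deriv φ₁) y := by
      rw [show (2:ℕ) = 1+1 from rfl, iteratedDeriv_succ, iteratedDeriv_one]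
    rw [h]
    exact ((hφ₁d2 y)).hasDerivAt
  have hE : ∀ y : ℂ, HasDerivAt E (a * deriv φ₁ y * E y) y := by
    intro y
    have h := ((hφ₁' y).mul_const a).cexp
    refine h.congr_deriv ?_
    simp only [hEdef]; ring
  have dTh : ∀ y : ℂ, HasDerivAt (Θ n)
      (a * deriv φ₁ y * E y * g y + E y * iteratedDeriv (n+1) f y) y := by
    intro y
    rw [hTh]
    have h := (hE y).mul (hDer n y)
    exact h
  have dThfun : deriv (Θ n) = fun y =>
      a * deriv φ₁ y * E y * g y + E y * iteratedDeriv (n+1) f y :=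
    funext fun y => (dTh y).deriv
  have ddTh : iteratedDeriv 2 (Θ n) x
      = ((a * iteratedDeriv 2 φ₁ x * E x + a * deriv φ₁ x * (a * deriv φ₁ x * E x)) * g x
          + (a * deriv φ₁ x * E x) * iteratedDeriv (n+1) f x)
        + (a * deriv φ₁ x * E x * iteratedDeriv (n+1) f x + E x * iteratedDeriv (n+2) f x) := by
    rw [show (2:ℕ) = 1+1 from rfl, iteratedDeriv_succ, iteratedDeriv_one, dThfun]
    have h1 : HasDerivAt (fun z => a * deriv φ₁ z * E z * g z)
        ((a * iteratedDeriv 2 φ₁ x * E x + a * deriv φ₁ x * (a * deriv φ₁ x * E x)) * g x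
          + (a * deriv φ₁ x * E x) * iteratedDeriv (n+1) f x) x := by
      have hu : HasDerivAt (fun z => a * deriv φ₁ z) (a * iteratedDeriv 2 φ₁ x) x :=
        (hφ₁'' x).const_mul a
      exact (hu.mul (hE x)).mul (hDer n x)
    have h2 : HasDerivAt (fun z => E z * iteratedDeriv (n+1) f z)
        (a * deriv φ₁ x * E x * iteratedDeriv (n+1) f x + E x * iteratedDeriv (n+2) f x) x :=
      (hE x).mul (hDer (n+1) x)
    exact (h1.add h2).deriv
  have hgx : Θ n x = E x * g x := by rw [hTh]
  have hkey := key n x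
  rw [ddTh, (dTh x).deriv, hgx, hdφ₂, hddφ₂, hkey, ← hgdef]
  push_cast
  ring
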